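/- Let N ∈ ℕ, let p ∈ ℝ^N satisfy p_k > 0 for all k, and set F := {0, p} ⊆ ℓ1^N (a skew set with skew(F) = min_k p_k). Then for every r ∈ (0, skew(F)/2), mg(C̄_F(r)) = 2(1 + r)^N − 2 e^{−(‖p‖₁ − 2Nr)} / (1 + e^{−(‖p‖₁ − 2Nr)}), where ‖p‖₁ = Σ_k |p_k|; consequently lim_{r↘0} mg(C̄_F(r)) = 2/(1 + e^{−‖p‖₁}) = mg(F). -/

import Mathlib

open Metric Set Filter Topology
open scoped ENNReal Classical

/-- `ℓ1^N`: `ℝ^N` with the 1-metric. -/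
abbrev L1 (N : ℕ) := PiLp 1 fun _ : Fin N => ℝ

/-- The skewness of a set `S ⊆ ℝ^N`. -/
noncomputable def skewness {N : ℕ} (S : Set (L1 N)) : ℝ≥0∞ :=
  ⨅ (a : S) (b : S) (_ : a ≠ b) (k : Fin N), ENNReal.ofReal |a.1 k - b.1 k|

/-- A set is skew when its skewness is positive. -/
def IsSkew {N : ℕ} (S : Set (L1 N)) : Prop := 0 < skewness S

/-- The closed cube with center `p` and "radius" `r`. -/
def cube {N : ℕ} (p : L1 N) (r : ℝ) : Set (L1 N) :=
  {x | ∀ k, x k ∈ Set.Icc (p k - r) (p k + r)}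

/-- The union of cubes centered at the points of a finite set. -/
def cubes {N : ℕ} (F : Finset (L1 N)) (r : ℝ) : Set (L1 N) :=
  ⋃ p ∈ F, cube p r

/-- The magnitude of a finite subset `F` of a metric space. -/
noncomputable def finMag {X : Type*} [MetricSpace X] (F : Finset X) : ℝ :=
  sSup {m : ℝ | ∃ w : X → ℝ,
    (∀ p ∈ F, ∑ q ∈ F, Real.exp (-dist p q) * w q = 1) ∧ m = ∑ p ∈ F, w p}

/-- The magnitude of a compact subset: supremum of magnitudes of finite subsets. -/
noncomputable def cMag {X : Type*} [MetricSpace X] (K : Set X) : ℝ :=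
  sSup {m : ℝ | ∃ F : Finset X, ↑F ⊆ K ∧ m = finMag F}

namespace MagAux
open Real MeasureTheory


noncomputable def fI (a : ℝ) : ℝ → ℝ := Set.indicator (Set.Iic a) (fun u => Real.exp (u - a))

lemma fI_nonneg (a u : ℝ) : 0 ≤ fI a u := Set.indicator_nonneg (fun _ _ => (Real.exp_pos _).le) u

lemma fI_mul (a b : ℝ) (u : ℝ) :
    fI a u * fI b u
      = Set.indicator (Set.Iic (min a b)) (fun u => Real.exp (2*u - a - b)) u := by
  simp only [fI, Set.indicator, Set.mem_Iic, le_min_iff]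
  by_cases ha : u ≤ a <;> by_cases hb : u ≤ b <;> simp [ha, hb]
  rw [← Real.exp_add]; congr 1; ring

lemma intOn_exp2 (m c d : ℝ) : IntegrableOn (fun u : ℝ => Real.exp (2*u - c - d)) (Set.Iic m) := by
  have h : Integrable ((Set.Iic (2*m)).indicator Real.exp) :=
    (integrableOn_exp_Iic (2*m)).integrable_indicator measurableSet_Iic
  have h2 := h.comp_mul_left' (R := 2) two_ne_zero
  have heq : (fun u : ℝ => (Set.Iic (2*m)).indicator Real.exp (2*u)) =
      (Set.Iic m).indicator (fun u => Real.exp (2*u)) := by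
    funext u; by_cases hu : u ≤ m
    · simp [Set.indicator, hu, (by linarith : 2*u ≤ 2*m)]
    · simp [Set.indicator, hu, (by linarith : ¬ (2*u ≤ 2*m))]
  rw [heq] at h2
  have h3 : IntegrableOn (fun u : ℝ => Real.exp (2*u)) (Set.Iic m) :=
    (integrable_indicator_iff measurableSet_Iic).1 h2
  have : (fun u : ℝ => Real.exp (2*u - c - d)) = fun u => Real.exp (-c-d) * Real.exp (2*u) := by
    funext u; rw [← Real.exp_add]; congr 1; ring
  rw [this]
  exact h3.const_mul _

lemma int_exp2 (m : ℝ) : ∫ u in Set.Iic m, Real.exp (2*u) = Real.exp (2*m) / 2 := by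
  have hder : ∀ x ∈ Set.Iic m, HasDerivAt (fun u => Real.exp (2*u) / 2) (Real.exp (2*x)) x := by
    intro x _
    have h1 : HasDerivAt (fun u : ℝ => 2*u) 2 x := by simpa using (hasDerivAt_id x).const_mul 2
    have h2 := (Real.hasDerivAt_exp (2*x)).comp x h1
    have h3 := h2.div_const 2
    exact h3.congr_deriv (by ring)
  have hint : IntegrableOn (fun u : ℝ => Real.exp (2*u)) (Set.Iic m) := by
    have := intOn_exp2 m 0 0; simpa using this
  have htend : Tendsto (fun u => Real.exp (2*u) / 2) atBot (𝓝 0) := by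
    have h1 : Tendsto (fun u : ℝ => 2*u) atBot atBot := tendsto_id.const_mul_atBot two_pos
    have := (Real.tendsto_exp_atBot.comp h1).div_const 2
    simpa using this
  have := integral_Iic_of_hasDerivAt_of_tendsto' hder hint htend
  rw [this]; ring

lemma fI_mul_integral (a b : ℝ) :
    ∫ u, fI a u * fI b u = Real.exp (-|a - b|) / 2 := by
  rw [show (fun u => fI a u * fI b u)
      = Set.indicator (Set.Iic (min a b)) (fun u => Real.exp (2*u - a - b)) from
    funext (fI_mul a b)]
  rw [integral_indicator measurableSet_Iic]
  have h1 : ∀ u : ℝ, Real.exp (2*u - a - b) = Real.exp (-a-b) * Real.exp (2*u) := by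
    intro u; rw [← Real.exp_add]; congr 1; ring
  simp_rw [h1]
  rw [integral_const_mul, int_exp2]
  have h2 : -a - b + 2 * min a b = -|a - b| := by
    rcases le_total a b with h | h
    · rw [min_eq_left h, abs_of_nonpos (by linarith)]; ring
    · rw [min_eq_right h, abs_of_nonneg (by linarith)]; ring
  rw [show Real.exp (-a - b) * (Real.exp (2 * min a b) / 2)
      = Real.exp (-a-b) * Real.exp (2 * min a b) / 2 from by ring, ← Real.exp_add, h2]

lemma fI_mul_integrable (a b : ℝ) : Integrable (fun u => fI a u * fI b u) := by
  rw [show (fun u => fI a u * fI b u)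
      = Set.indicator (Set.Iic (min a b)) (fun u => Real.exp (2*u - a - b)) from
    funext (fI_mul a b)]
  exact (integrable_indicator_iff measurableSet_Iic).2 (intOn_exp2 (min a b) a b)

lemma psd (N : ℕ) : ∀ {ι : Type} (I : Finset ι) (x : ι → Fin N → ℝ) (c : ι → ℝ),
    0 ≤ ∑ ij ∈ I ×ˢ I, c ij.1 * c ij.2 * Real.exp (-∑ k, |x ij.1 k - x ij.2 k|) := by
  induction N with
  | zero =>
      intro ι I x c
      simp only [Finset.univ_eq_empty, Finset.sum_empty, neg_zero, Real.exp_zero, mul_one]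
      rw [Finset.sum_product]
      rw [show ∑ i ∈ I, ∑ j ∈ I, c i * c j = (∑ i ∈ I, c i) * (∑ j ∈ I, c j) from by
        rw [Finset.sum_mul_sum]]
      exact mul_self_nonneg _
  | succ n ih =>
      intro ι I x c
      have key : ∀ ij : ι × ι,
          c ij.1 * c ij.2 * Real.exp (-∑ k, |x ij.1 k - x ij.2 k|)
            = ∫ u, (c ij.1 * c ij.2 *
                Real.exp (-∑ k : Fin n, |x ij.1 k.succ - x ij.2 k.succ|) * 2)
                * (fI (x ij.1 0) u * fI (x ij.2 0) u) := by
        intro ij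
        rw [integral_const_mul, fI_mul_integral, Fin.sum_univ_succ, neg_add, Real.exp_add]
        ring
      calc (0:ℝ) ≤ ∫ u, ∑ ij ∈ I ×ˢ I,
              (c ij.1 * c ij.2 *
                Real.exp (-∑ k : Fin n, |x ij.1 k.succ - x ij.2 k.succ|) * 2)
                * (fI (x ij.1 0) u * fI (x ij.2 0) u) := by
            apply integral_nonneg
            intro u
            have h2 := ih (ι := ι) I (fun i => fun k => x i k.succ)
              (fun i => c i * fI (x i 0) u)
            calc (0:ℝ) ≤ 2 * ∑ ij ∈ I ×ˢ I, (c ij.1 * fI (x ij.1 0) u) *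
                    (c ij.2 * fI (x ij.2 0) u) *
                    Real.exp (-∑ k : Fin n, |x ij.1 k.succ - x ij.2 k.succ|) := by
                  positivity
              _ = ∑ ij ∈ I ×ˢ I,
                    (c ij.1 * c ij.2 *
                      Real.exp (-∑ k : Fin n, |x ij.1 k.succ - x ij.2 k.succ|) * 2)
                      * (fI (x ij.1 0) u * fI (x ij.2 0) u) := by
                  rw [Finset.mul_sum]; apply Finset.sum_congr rfl; intro ij _; ring
        _ = _ := by
            rw [integral_finset_sum]
            · exact (Finset.sum_congr rfl fun ij _ => (key ij).symm)
            · intro ij _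
              exact (fI_mul_integrable (x ij.1 0) (x ij.2 0)).const_mul _



def IsWeighting {X : Type*} [MetricSpace X] (F : Finset X) (w : X → ℝ) : Prop :=
  ∀ p ∈ F, ∑ q ∈ F, Real.exp (-dist p q) * w q = 1

lemma l1dist {N : ℕ} (x y : L1 N) : dist x y = ∑ k, |x k - y k| := by
  rw [PiLp.dist_eq_sum (by simp : 0 < (1:ENNReal).toReal)]
  simp [ENNReal.toReal_one, Real.rpow_one, Real.dist_eq]

lemma sum_eq_of_weighting {X : Type*} [MetricSpace X] (F : Finset X) (w w' : X → ℝ)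
    (hw : IsWeighting F w) (hw' : IsWeighting F w') : ∑ p ∈ F, w p = ∑ p ∈ F, w' p := by
  calc ∑ p ∈ F, w p = ∑ p ∈ F, (∑ q ∈ F, Real.exp (-dist p q) * w' q) * w p := by
        refine Finset.sum_congr rfl fun p hp => ?_
        rw [hw' p hp, one_mul]
    _ = ∑ q ∈ F, (∑ p ∈ F, Real.exp (-dist q p) * w p) * w' q := by
        simp only [Finset.sum_mul]
        rw [Finset.sum_comm]
        refine Finset.sum_congr rfl fun p _ => Finset.sum_congr rfl fun q _ => ?_
        rw [dist_comm]; ring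
    _ = ∑ q ∈ F, w' q := by
        refine Finset.sum_congr rfl fun q hq => ?_
        rw [hw q hq, one_mul]

lemma finMag_eq_sum {X : Type*} [MetricSpace X] (F : Finset X) (w : X → ℝ)
    (hw : IsWeighting F w) : finMag F = ∑ p ∈ F, w p := by
  unfold finMag
  have hset : {m : ℝ | ∃ w' : X → ℝ,
      (∀ p ∈ F, ∑ q ∈ F, Real.exp (-dist p q) * w' q = 1) ∧ m = ∑ p ∈ F, w' p}
      = {∑ p ∈ F, w p} := by
    ext m
    constructor
    · rintro ⟨w', hw', rfl⟩
      exact (sum_eq_of_weighting F w' w hw' hw)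
    · rintro rfl
      exact ⟨w, hw, rfl⟩
  rw [hset, csSup_singleton]

lemma finMag_empty {X : Type*} [MetricSpace X] : finMag (∅ : Finset X) = 0 := by
  rw [finMag_eq_sum ∅ (fun _ => 0) (fun p hp => by simp at hp), Finset.sum_empty]

lemma weighting_sum_eq_pair {N : ℕ} (G : Finset (L1 N)) (w : (L1 N) → ℝ)
    (hw : IsWeighting G w) :
    ∑ p ∈ G, w p = ∑ ij ∈ G ×ˢ G, w ij.1 * w ij.2 * Real.exp (-dist ij.1 ij.2) := by
  rw [Finset.sum_product]
  refine (Finset.sum_congr rfl fun p hp => ?_).symm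
  calc ∑ q ∈ G, w p * w q * Real.exp (-dist p q)
      = w p * ∑ q ∈ G, Real.exp (-dist p q) * w q := by
        rw [Finset.mul_sum]; exact Finset.sum_congr rfl fun q _ => by ring
    _ = w p := by rw [hw p hp, mul_one]

lemma pair_sum_nonneg {N : ℕ} (G : Finset (L1 N)) (c : (L1 N) → ℝ) :
    0 ≤ ∑ ij ∈ G ×ˢ G, c ij.1 * c ij.2 * Real.exp (-dist ij.1 ij.2) := by
  have := psd N G (fun i => fun k => i k) c
  simpa [l1dist] using this

lemma weighting_sum_nonneg {N : ℕ} (G : Finset (L1 N)) (w : (L1 N) → ℝ)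
    (hw : IsWeighting G w) : 0 ≤ ∑ p ∈ G, w p := by
  rw [weighting_sum_eq_pair G w hw]; exact pair_sum_nonneg G w

lemma finMag_le_weighting {N : ℕ} (F G : Finset (L1 N)) (hFG : F ⊆ G) (wG : (L1 N) → ℝ)
    (hwG : IsWeighting G wG) : finMag F ≤ ∑ p ∈ G, wG p := by
  by_cases hF : ∃ wF, IsWeighting F wF
  · obtain ⟨wF, hwF⟩ := hF
    rw [finMag_eq_sum F wF hwF]
    set v : (L1 N) → ℝ := fun x => if x ∈ F then wF x else 0 with hv
    set e : (L1 N) → (L1 N) → ℝ := fun p q => Real.exp (-dist p q) with he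
    have hvG : ∀ p ∈ G, ∑ q ∈ G, e p q * v q = if p ∈ F then 1 else ∑ q ∈ G, e p q * v q := by
      intro p hp
      by_cases hpF : p ∈ F
      · simp only [hpF, if_pos]
        rw [← hwF p hpF]
        rw [← Finset.sum_subset hFG (fun q _ hq => by simp [hv, hq])]
        refine Finset.sum_congr rfl fun q hq => by simp [hv, hq, he]
      · simp [hpF]
    -- T1
    have hT1 : ∑ ij ∈ G ×ˢ G, v ij.1 * v ij.2 * e ij.1 ij.2 = ∑ p ∈ F, wF p := by
      rw [Finset.sum_product]
      rw [← Finset.sum_subset hFG (fun p hp hpF => by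
        refine Finset.sum_eq_zero fun q _ => by simp [hv, hpF])]
      refine Finset.sum_congr rfl fun p hp => ?_
      calc ∑ q ∈ G, v p * v q * e p q = v p * ∑ q ∈ G, e p q * v q := by
            rw [Finset.mul_sum]; exact Finset.sum_congr rfl fun q _ => by ring
        _ = wF p := by rw [hvG p (hFG hp)]; simp [hv, hp]
    -- T2 : ∑ v p * wG q * e = ∑ F wF
    have hT2 : ∑ ij ∈ G ×ˢ G, v ij.1 * wG ij.2 * e ij.1 ij.2 = ∑ p ∈ F, wF p := by
      rw [Finset.sum_product]
      rw [← Finset.sum_subset hFG (fun p hp hpF => by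
        refine Finset.sum_eq_zero fun q _ => by simp [hv, hpF])]
      refine Finset.sum_congr rfl fun p hp => ?_
      calc ∑ q ∈ G, v p * wG q * e p q = v p * ∑ q ∈ G, e p q * wG q := by
            rw [Finset.mul_sum]; exact Finset.sum_congr rfl fun q _ => by ring
        _ = wF p := by rw [hwG p (hFG hp)]; simp [hv, hp]
    have hT2' : ∑ ij ∈ G ×ˢ G, wG ij.1 * v ij.2 * e ij.1 ij.2 = ∑ p ∈ F, wF p := by
      rw [← hT2]
      rw [Finset.sum_product, Finset.sum_comm, ← Finset.sum_product']
      refine Finset.sum_congr rfl fun ij _ => ?_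
      simp only [he]; rw [dist_comm]; ring
    have hT3 : ∑ ij ∈ G ×ˢ G, wG ij.1 * wG ij.2 * e ij.1 ij.2 = ∑ p ∈ G, wG p :=
      (weighting_sum_eq_pair G wG hwG).symm
    have hkey := pair_sum_nonneg G (fun x => wG x - v x)
    have hexpand : ∑ ij ∈ G ×ˢ G, (wG ij.1 - v ij.1) * (wG ij.2 - v ij.2) * Real.exp (-dist ij.1 ij.2)
        = (∑ p ∈ G, wG p) - (∑ p ∈ F, wF p) := by
      have hterm : ∀ ij : L1 N × L1 N,
          (wG ij.1 - v ij.1) * (wG ij.2 - v ij.2) * Real.exp (-dist ij.1 ij.2)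
          = wG ij.1 * wG ij.2 * e ij.1 ij.2 - v ij.1 * wG ij.2 * e ij.1 ij.2
            - wG ij.1 * v ij.2 * e ij.1 ij.2 + v ij.1 * v ij.2 * e ij.1 ij.2 := by
        intro ij; simp only [he]; ring
      rw [Finset.sum_congr rfl (fun ij _ => hterm ij), Finset.sum_add_distrib,
        Finset.sum_sub_distrib, Finset.sum_sub_distrib, hT1, hT2, hT2', hT3]
      ring
    linarith [hexpand ▸ hkey]
  · have hset : {m : ℝ | ∃ w' : (L1 N) → ℝ, (∀ p ∈ F, ∑ q ∈ F, Real.exp (-dist p q) * w' q = 1) ∧ m = ∑ p ∈ F, w' p} = ∅ := by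
      ext m; simp only [Set.mem_setOf_eq, Set.mem_empty_iff_false, iff_false]
      rintro ⟨w', hw', _⟩; exact hF ⟨w', hw'⟩
    unfold finMag; rw [hset, Real.sSup_empty]
    exact weighting_sum_nonneg G wG hwG



noncomputable def th (y : ℝ) : ℝ := (1 - Real.exp (-y)) / (1 + Real.exp (-y))

lemma one_add_exp_pos (y : ℝ) : 0 < 1 + Real.exp (-y) := by positivity

lemma th_key (g : ℝ) : Real.exp (-g) * (1 + th g) = 1 - th g := by
  have h : 1 + Real.exp (-g) ≠ 0 := (one_add_exp_pos g).ne'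
  simp only [th]
  field_simp
  ring

lemma th_nonneg {g : ℝ} (hg : 0 ≤ g) : 0 ≤ th g := by
  have h1 : Real.exp (-g) ≤ 1 := Real.exp_le_one_iff.2 (by linarith)
  have := one_add_exp_pos g
  apply div_nonneg <;> linarith

/-- helper: nonneg on `Ici 0` from derivative -/
lemma nonneg_of_deriv (f f' : ℝ → ℝ) (hder : ∀ x, HasDerivAt f (f' x) x)
    (h0 : ∀ x, 0 ≤ x → 0 ≤ f' x) (hf0 : f 0 = 0) : ∀ g, 0 ≤ g → 0 ≤ f g := by
  intro g hg
  have hmono : MonotoneOn f (Set.Ici 0) := by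
    apply monotoneOn_of_deriv_nonneg (convex_Ici 0)
      (fun x _ => (hder x).continuousAt.continuousWithinAt)
      (fun x _ => (hder x).differentiableAt.differentiableWithinAt)
    intro x hx
    rw [(hder x).deriv]
    exact h0 x (le_of_lt (by simpa using hx))
  have := hmono (Set.self_mem_Ici) (by exact hg) hg
  linarith [hf0 ▸ this]

lemma exp_neg_le_quad {g : ℝ} (hg : 0 ≤ g) : Real.exp (-g) ≤ 1 - g + g^2/2 := by
  have := nonneg_of_deriv (fun g => 1 - g + g^2/2 - Real.exp (-g))
    (fun g => -1 + g + Real.exp (-g)) ?_ ?_ (by simp) g hg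
  · linarith
  · intro x
    have h1 : HasDerivAt (fun g : ℝ => Real.exp (-g)) (-Real.exp (-x)) x := by
      simpa using (hasDerivAt_neg x).exp
    have h2 : HasDerivAt (fun g : ℝ => 1 - g + g^2/2) (-1 + x) x := by
      have := (((hasDerivAt_id x).const_sub 1).add (((hasDerivAt_id x).pow 2).div_const 2))
      exact this.congr_deriv (by simp)
    exact (h2.sub h1).congr_deriv (by ring)
  · intro x hx
    show (0:ℝ) ≤ -1 + x + Real.exp (-x)
    have := Real.add_one_le_exp (-x)
    linarith

lemma th_le_half {g : ℝ} (hg : 0 ≤ g) : th g ≤ g / 2 := by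
  have key : 0 ≤ g * (1 + Real.exp (-g)) - 2 * (1 - Real.exp (-g)) := by
    apply nonneg_of_deriv (fun g => g * (1 + Real.exp (-g)) - 2 * (1 - Real.exp (-g)))
      (fun g => 1 - Real.exp (-g) - g * Real.exp (-g)) ?_ ?_ (by simp) g hg
    · intro x
      have h1 : HasDerivAt (fun g : ℝ => Real.exp (-g)) (-Real.exp (-x)) x := by
        simpa using (hasDerivAt_neg x).exp
      have h2 := ((hasDerivAt_id x).mul (h1.const_add 1)).sub ((h1.const_sub 1).const_mul 2)
      exact h2.congr_deriv (by simp; ring)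
    · intro x hx
      have h3 := Real.add_one_le_exp x
      have h4 : (1 + x) * Real.exp (-x) ≤ 1 := by
        have h5 := mul_le_mul_of_nonneg_right h3 (Real.exp_pos (-x)).le
        rw [← Real.exp_add, add_neg_cancel, Real.exp_zero] at h5
        rw [add_comm 1 x]; exact h5
      show (0:ℝ) ≤ 1 - Real.exp (-x) - x * Real.exp (-x)
      nlinarith [Real.exp_pos (-x)]
  rw [th, div_le_iff₀ (one_add_exp_pos g)]
  linarith

lemma th_ge {g : ℝ} (hg : 0 ≤ g) : g/2 - g^2/4 ≤ th g := by
  have h1 : 1 - Real.exp (-g) ≥ g - g^2/2 := by linarith [exp_neg_le_quad hg]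
  have h2 : 1 + Real.exp (-g) ≤ 2 := by
    linarith [Real.exp_le_one_iff.2 (by linarith : -g ≤ 0)]
  have hpos := one_add_exp_pos g
  rw [th, le_div_iff₀ hpos]
  nlinarith [Real.exp_pos (-g), Real.exp_le_one_iff.2 (by linarith : -g ≤ 0)]

/-! chain weights -/

noncomputable def bL (x : ℕ → ℝ) (j : ℕ) : ℝ := if j = 0 then 1 else th (x j - x (j-1))
noncomputable def bR (x : ℕ → ℝ) (n j : ℕ) : ℝ := if j = n then 1 else th (x (j+1) - x j)
noncomputable def cw (x : ℕ → ℝ) (n j : ℕ) : ℝ := (bL x j + bR x n j) / 2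

lemma chain_left (x : ℕ → ℝ) (n : ℕ) :
    ∀ i, i ≤ n → ∑ j ∈ Finset.range (i+1), Real.exp (-(x i - x j)) * cw x n j
      = (1 + bR x n i) / 2 := by
  intro i
  induction i with
  | zero =>
      intro _
      simp [cw, bL]
  | succ i ih =>
      intro hi
      rw [Finset.sum_range_succ]
      have hfac : ∀ j, Real.exp (-(x (i+1) - x j))
          = Real.exp (-(x (i+1) - x i)) * Real.exp (-(x i - x j)) := by
        intro j; rw [← Real.exp_add]; congr 1; ring
      have hsum : ∑ j ∈ Finset.range (i+1), Real.exp (-(x (i+1) - x j)) * cw x n j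
          = Real.exp (-(x (i+1) - x i)) * ((1 + bR x n i) / 2) := by
        rw [← ih (by omega), Finset.mul_sum]
        exact Finset.sum_congr rfl fun j _ => by rw [hfac j]; ring
      rw [hsum]
      have hbRi : bR x n i = th (x (i+1) - x i) := by rw [bR, if_neg (by omega)]
      have hbLi : bL x (i+1) = th (x (i+1) - x i) := by rw [bL, if_neg (by omega)]; simp
      simp only [cw, hbRi, hbLi, sub_self, neg_zero, Real.exp_zero, one_mul]
      linarith [th_key (x (i+1) - x i)]

lemma chain_right (x : ℕ → ℝ) (n : ℕ) :
    ∀ d i, i + d = n → ∑ j ∈ Finset.Icc i n, Real.exp (-(x j - x i)) * cw x n j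
      = (1 + bL x i) / 2 := by
  intro d
  induction d with
  | zero =>
      intro i hi
      have : i = n := by omega
      subst this
      simp [cw, bR]
      ring
  | succ d ih =>
      intro i hi
      have hin : i ≤ n := by omega
      have hIcc : Finset.Icc i n = insert i (Finset.Icc (i+1) n) := by
        rw [Finset.Icc_add_one_left_eq_Ioc, Finset.Ioc_insert_left hin]
      rw [hIcc, Finset.sum_insert (by simp)]
      have hfac : ∀ j, Real.exp (-(x j - x i))
          = Real.exp (-(x (i+1) - x i)) * Real.exp (-(x j - x (i+1))) := by
        intro j; rw [← Real.exp_add]; congr 1; ring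
      have hsum : ∑ j ∈ Finset.Icc (i+1) n, Real.exp (-(x j - x i)) * cw x n j
          = Real.exp (-(x (i+1) - x i)) * ((1 + bL x (i+1)) / 2) := by
        rw [← ih (i+1) (by omega), Finset.mul_sum]
        exact Finset.sum_congr rfl fun j _ => by rw [hfac j]; ring
      rw [hsum]
      have hbRi : bR x n i = th (x (i+1) - x i) := by rw [bR, if_neg (by omega)]
      have hbLi : bL x (i+1) = th (x (i+1) - x i) := by rw [bL, if_neg (by omega)]; simp
      simp only [cw, hbRi, hbLi, sub_self, neg_zero, Real.exp_zero, one_mul]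
      linarith [th_key (x (i+1) - x i)]

lemma chain_full (x : ℕ → ℝ) (hx : StrictMono x) (n : ℕ) :
    ∀ i, i ≤ n → ∑ j ∈ Finset.range (n+1), Real.exp (-|x i - x j|) * cw x n j = 1 := by
  intro i hi
  have hsplit : Finset.range (n+1) = Finset.range (i+1) ∪ Finset.Icc (i+1) n := by
    ext m; simp [Nat.lt_succ_iff]; omega
  have hdisj : Disjoint (Finset.range (i+1)) (Finset.Icc (i+1) n) := by
    rw [Finset.disjoint_left]; intro m hm hm2
    simp [Nat.lt_succ_iff] at hm hm2; omega
  rw [hsplit, Finset.sum_union hdisj]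
  have habs1 : ∀ j ∈ Finset.range (i+1), |x i - x j| = x i - x j := by
    intro j hj; simp [Nat.lt_succ_iff] at hj
    rw [abs_of_nonneg (by linarith [hx.le_iff_le.2 hj])]
  have habs2 : ∀ j ∈ Finset.Icc (i+1) n, |x i - x j| = x j - x i := by
    intro j hj; simp at hj
    rw [abs_of_nonpos (by linarith [hx.le_iff_le.2 (by omega : i ≤ j)])]; ring
  have e1 : ∑ j ∈ Finset.range (i+1), Real.exp (-|x i - x j|) * cw x n j
      = ∑ j ∈ Finset.range (i+1), Real.exp (-(x i - x j)) * cw x n j :=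
    Finset.sum_congr rfl fun j hj => by rw [habs1 j hj]
  have e2 : ∑ j ∈ Finset.Icc (i+1) n, Real.exp (-|x i - x j|) * cw x n j
      = ∑ j ∈ Finset.Icc (i+1) n, Real.exp (-(x j - x i)) * cw x n j :=
    Finset.sum_congr rfl fun j hj => by rw [habs2 j hj]
  rw [e1, e2, chain_left x n i hi]
  by_cases hin : i = n
  · have hIccE : Finset.Icc (i+1) n = ∅ := by rw [Finset.Icc_eq_empty_iff]; omega
    rw [hIccE, Finset.sum_empty, bR, if_pos hin]
    ring
  · -- i < n
    have hfac : ∀ j, Real.exp (-(x j - x i))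
        = Real.exp (-(x (i+1) - x i)) * Real.exp (-(x j - x (i+1))) := by
      intro j; rw [← Real.exp_add]; congr 1; ring
    have hsum : ∑ j ∈ Finset.Icc (i+1) n, Real.exp (-(x j - x i)) * cw x n j
        = Real.exp (-(x (i+1) - x i)) * ((1 + bL x (i+1)) / 2) := by
      rw [← chain_right x n (n - (i+1)) (i+1) (by omega), Finset.mul_sum]
      exact Finset.sum_congr rfl fun j _ => by rw [hfac j]; ring
    rw [hsum]
    have hbRi : bR x n i = th (x (i+1) - x i) := by rw [bR, if_neg hin]
    have hbLi : bL x (i+1) = th (x (i+1) - x i) := by rw [bL, if_neg (by omega)]; simp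
    rw [hbRi, hbLi]
    linarith [th_key (x (i+1) - x i)]

lemma chain_weight_sum (x : ℕ → ℝ) (n : ℕ) :
    ∑ j ∈ Finset.range (n+1), cw x n j = 1 + ∑ j ∈ Finset.range n, th (x (j+1) - x j) := by
  have hL : ∑ j ∈ Finset.range (n+1), bL x j = 1 + ∑ j ∈ Finset.range n, th (x (j+1) - x j) := by
    rw [Finset.sum_range_succ']
    have h0 : bL x 0 = 1 := by rw [bL, if_pos rfl]
    have hj : ∀ j ∈ Finset.range n, bL x (j+1) = th (x (j+1) - x j) := by
      intro j _; rw [bL, if_neg (by omega)]; simp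
    rw [h0, Finset.sum_congr rfl hj, add_comm]
  have hR : ∑ j ∈ Finset.range (n+1), bR x n j = (∑ j ∈ Finset.range n, th (x (j+1) - x j)) + 1 := by
    rw [Finset.sum_range_succ, bR, if_pos rfl]
    congr 1
    refine Finset.sum_congr rfl fun j hj => ?_
    simp at hj
    rw [bR, if_neg (by omega)]
  simp only [cw]
  rw [← Finset.sum_div, Finset.sum_add_distrib, hL, hR]
  ring

lemma chain_finset_core (x : ℕ → ℝ) (hx : StrictMono x) (n : ℕ) :
    ∃ w : ℝ → ℝ,
      (∀ a ∈ (Finset.range (n+1)).image x, ∑ b ∈ (Finset.range (n+1)).image x,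
        Real.exp (-|a - b|) * w b = 1) ∧
      ∑ b ∈ (Finset.range (n+1)).image x, w b
        = 1 + ∑ j ∈ Finset.range n, th (x (j+1) - x j) := by
  classical
  set w : ℝ → ℝ := fun b => ∑ j ∈ Finset.range (n+1), if x j = b then cw x n j else 0 with hw
  have hinj : ∀ i ∈ Finset.range (n+1), ∀ j ∈ Finset.range (n+1), x i = x j → i = j :=
    fun i _ j _ h => hx.injective h
  have hwx : ∀ j ∈ Finset.range (n+1), w (x j) = cw x n j := by
    intro j hj
    rw [hw]
    have h := Finset.sum_eq_single_of_mem (f := fun j' => if x j' = x j then cw x n j' else 0)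
      j hj (fun j' _ hne => if_neg (fun h => hne (hx.injective h)))
    simpa using h
  refine ⟨w, ?_, ?_⟩
  · intro a ha
    obtain ⟨i, hi, rfl⟩ := Finset.mem_image.1 ha
    rw [Finset.sum_image hinj]
    rw [Finset.sum_congr rfl fun j hj => by rw [hwx j hj]]
    exact chain_full x hx n i (by simpa [Nat.lt_succ_iff] using hi)
  · rw [Finset.sum_image hinj]
    rw [Finset.sum_congr rfl fun j hj => by rw [hwx j hj]]
    exact chain_weight_sum x n

lemma exists_strictMono_enum (A : Finset ℝ) (hA : A.Nonempty) :
    ∃ x : ℕ → ℝ, StrictMono x ∧ (Finset.range (A.card - 1 + 1)).image x = A := by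
  classical
  set k := A.card with hk
  have hk1 : 1 ≤ k := Finset.card_pos.2 hA
  set M := A.max' hA with hM
  set x : ℕ → ℝ := fun j => if h : j < k then (A.orderIsoOfFin rfl ⟨j, h⟩ : ℝ)
    else M + (j + 1 - k : ℕ) with hxdef
  have hpos : ∀ j (h : j < k), x j = (A.orderIsoOfFin rfl ⟨j, h⟩ : ℝ) := by
    intro j h; simp only [hxdef]; rw [dif_pos h]
  have hneg : ∀ j, ¬ j < k → x j = M + ((j + 1 - k : ℕ) : ℝ) := by
    intro j h; simp only [hxdef]; rw [dif_neg h]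
  have hmem : ∀ j (h : j < k), x j ∈ A := by
    intro j h; rw [hpos j h]
    exact (A.orderIsoOfFin rfl ⟨j, h⟩).2
  have hxmono : StrictMono x := by
    apply strictMono_nat_of_lt_succ
    intro j
    by_cases h1 : j + 1 < k
    · have h0 : j < k := by omega
      rw [hpos j h0, hpos (j+1) h1]
      have hlt : (⟨j, h0⟩ : Fin k) < ⟨j+1, h1⟩ := by simp [Fin.lt_def]
      exact_mod_cast (A.orderIsoOfFin rfl).strictMono hlt
    · by_cases h0 : j < k
      · rw [hneg (j+1) h1]
        have hle : x j ≤ M := A.le_max' _ (hmem j h0)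
        have hca : (1:ℝ) ≤ ((j + 1 + 1 - k : ℕ) : ℝ) := by
          have : 1 ≤ j + 1 + 1 - k := by omega
          exact_mod_cast this
        linarith
      · rw [hneg j h0, hneg (j+1) (by omega)]
        have : ((j + 1 - k : ℕ) : ℝ) < ((j + 1 + 1 - k : ℕ) : ℝ) := by
          have : j + 1 - k < j + 1 + 1 - k := by omega
          exact_mod_cast this
        linarith
  refine ⟨x, hxmono, ?_⟩
  have hrange : k - 1 + 1 = k := by omega
  rw [hrange]
  apply Finset.eq_of_subset_of_card_le
  · intro b hb
    obtain ⟨j, hj, rfl⟩ := Finset.mem_image.1 hb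
    exact hmem j (by simpa using hj)
  · rw [Finset.card_image_of_injOn (hxmono.injective.injOn)]
    simp [hk]
lemma chain_of_finset (A : Finset ℝ) (hA : A.Nonempty) (lo hi : ℝ)
    (hsub : ∀ a ∈ A, a ∈ Set.Icc lo hi) :
    ∃ w : ℝ → ℝ, (∀ a ∈ A, ∑ b ∈ A, Real.exp (-|a - b|) * w b = 1) ∧
      1 ≤ ∑ b ∈ A, w b ∧ ∑ b ∈ A, w b ≤ 1 + (hi - lo)/2 := by
  obtain ⟨x, hxm, hxA⟩ := exists_strictMono_enum A hA
  set n := A.card - 1 with hn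
  obtain ⟨w, hw1, hw2⟩ := chain_finset_core x hxm n
  rw [hxA] at hw1 hw2
  refine ⟨w, hw1, ?_, ?_⟩
  · rw [hw2]
    have : 0 ≤ ∑ j ∈ Finset.range n, th (x (j+1) - x j) :=
      Finset.sum_nonneg fun j _ => th_nonneg (by linarith [hxm (Nat.lt_succ_self j)])
    linarith
  · rw [hw2]
    have hth : ∀ j ∈ Finset.range n, th (x (j+1) - x j) ≤ (x (j+1) - x j)/2 :=
      fun j _ => th_le_half (by linarith [hxm (Nat.lt_succ_self j)])
    have h1 : ∑ j ∈ Finset.range n, th (x (j+1) - x j)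
        ≤ ∑ j ∈ Finset.range n, (x (j+1) - x j)/2 := Finset.sum_le_sum hth
    have h2 : ∑ j ∈ Finset.range n, (x (j+1) - x j)/2 = (x n - x 0)/2 := by
      rw [← Finset.sum_div, Finset.sum_range_sub]
    have hx0 : x 0 ∈ A := by
      rw [← hxA]; exact Finset.mem_image_of_mem x (by simp)
    have hxn : x n ∈ A := by
      rw [← hxA]; exact Finset.mem_image_of_mem x (by simp)
    have b0 := hsub _ hx0
    have bn := hsub _ hxn
    simp only [Set.mem_Icc] at b0 bn
    linarith

lemma chain_grid (r : ℝ) (hr : 0 < r) (m : ℕ) (hm : 0 < m) :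
    ∃ A : Finset ℝ, (∀ a ∈ A, a ∈ Set.Icc (-r) r) ∧ (r ∈ A) ∧
      ∃ w : ℝ → ℝ, (∀ a ∈ A, ∑ b ∈ A, Real.exp (-|a - b|) * w b = 1) ∧
        ∑ b ∈ A, w b = 1 + m * th (2*r/m) := by
  have hm' : (0:ℝ) < m := by exact_mod_cast hm
  have hgp : (0:ℝ) < 2*r/m := by positivity
  set x : ℕ → ℝ := fun j => -r + (2*r/m) * j with hxdef
  have hxval : ∀ j : ℕ, x j = -r + (2*r/m) * j := fun j => rfl
  have hxm : StrictMono x := by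
    intro a b hab
    have hab' : (a:ℝ) < b := by exact_mod_cast hab
    have := mul_lt_mul_of_pos_left hab' hgp
    rw [hxval a, hxval b]
    linarith
  have hgap : ∀ j : ℕ, x (j+1) - x j = 2*r/m := by
    intro j; rw [hxval (j+1), hxval j]; push_cast; ring
  have hxmem : ∀ j ≤ m, x j ∈ Set.Icc (-r) r := by
    intro j hj
    have hj' : (j:ℝ) ≤ m := by exact_mod_cast hj
    have h1 : (0:ℝ) ≤ (2*r/m) * j := by positivity
    have h2 : (2*r/m) * j ≤ (2*r/m) * m := by
      apply mul_le_mul_of_nonneg_left hj' hgp.le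
    have h3 : (2*r/m) * m = 2*r := by field_simp
    rw [hxval j]
    constructor <;> [linarith; linarith]
  have hxr : x m = r := by
    rw [hxval m]
    have : (2*r/m) * m = 2*r := by field_simp
    linarith
  refine ⟨(Finset.range (m+1)).image x, ?_, ?_, ?_⟩
  · intro a ha
    obtain ⟨j, hj, rfl⟩ := Finset.mem_image.1 ha
    exact hxmem j (by simpa [Nat.lt_succ_iff] using hj)
  · rw [← hxr]
    exact Finset.mem_image_of_mem x (by simp)
  · obtain ⟨w, hw1, hw2⟩ := chain_finset_core x hxm m
    refine ⟨w, hw1, ?_⟩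
    rw [hw2]
    rw [Finset.sum_congr rfl fun j _ => by rw [hgap j]]
    rw [Finset.sum_const, nsmul_eq_mul]
    simp


noncomputable def piF {N : ℕ} (S : Fin N → Finset ℝ) : Finset (L1 N) :=
  (Fintype.piFinset S).map ⟨WithLp.toLp 1, WithLp.toLp_injective 1⟩

lemma mem_piF {N : ℕ} (S : Fin N → Finset ℝ) (x : L1 N) : x ∈ piF S ↔ ∀ k, x k ∈ S k := by
  constructor
  · intro h
    obtain ⟨y, hy, rfl⟩ := Finset.mem_map.1 h
    exact Fintype.mem_piFinset.1 hy
  · intro h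
    exact Finset.mem_map.2 ⟨WithLp.ofLp x, Fintype.mem_piFinset.2 h, rfl⟩

lemma prod_weighting {N : ℕ} (S : Fin N → Finset ℝ) (w : Fin N → ℝ → ℝ)
    (hw : ∀ k, ∀ a ∈ S k, ∑ b ∈ S k, Real.exp (-|a - b|) * w k b = 1) :
    (∀ x : L1 N, x ∈ piF S →
      ∑ y ∈ piF S, Real.exp (-dist x y) * ∏ k, w k (y k) = 1) ∧
    ∑ y ∈ piF S, (∏ k, w k (y k)) = ∏ k, ∑ b ∈ S k, w k b := by
  constructor
  · intro x hx
    have hterm : ∀ y : L1 N, Real.exp (-dist x y) * ∏ k, w k (y k)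
        = ∏ k, (Real.exp (-|x k - y k|) * w k (y k)) := by
      intro y
      rw [l1dist, Finset.prod_mul_distrib, ← Real.exp_sum]
      congr 2
      rw [← Finset.sum_neg_distrib]
    refine (Finset.sum_congr rfl fun y _ => hterm y).trans ?_
    rw [piF, Finset.sum_map]
    refine (Finset.prod_univ_sum S fun k b => Real.exp (-|x k - b|) * w k b).symm.trans ?_
    have hx' : ∀ k, x k ∈ S k := fun k => (mem_piF S x).1 hx k
    refine (Finset.prod_congr rfl fun k _ => hw k (x k) (hx' k)).trans ?_
    simp
  · rw [piF, Finset.sum_map]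
    exact (Finset.prod_univ_sum S fun k b => w k b).symm

lemma glue {N : ℕ} (GA GB : Finset (L1 N)) (cA cB : L1 N)
    (hdisj : Disjoint GA GB) (hcA : cA ∈ GA) (hcB : cB ∈ GB)
    (hsplit : ∀ x ∈ GA, ∀ y ∈ GB, dist x y = dist x cA + dist cA cB + dist cB y)
    (wA wB : L1 N → ℝ)
    (hwA : ∀ x ∈ GA, ∑ y ∈ GA, Real.exp (-dist x y) * wA y = 1)
    (hwB : ∀ x ∈ GB, ∑ y ∈ GB, Real.exp (-dist x y) * wB y = 1) :
    ∃ w : L1 N → ℝ, IsWeighting (GA ∪ GB) w ∧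
      ∑ q ∈ GA ∪ GB, w q = (∑ q ∈ GA, wA q) + (∑ q ∈ GB, wB q)
        - 2 * Real.exp (-dist cA cB) / (1 + Real.exp (-dist cA cB)) := by
  classical
  set E : ℝ := Real.exp (-dist cA cB) with hE
  have hEpos : 0 < E := Real.exp_pos _
  have h1E : (0:ℝ) < 1 + E := by linarith
  set t : ℝ := -(E / (1 + E)) with ht
  have htkey : t + E * (1 + t) = 0 := by
    rw [ht]; field_simp; ring
  set w : L1 N → ℝ := fun q =>
    (if q ∈ GA then wA q else wB q) + (if q = cA ∨ q = cB then t else 0) with hwdef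
  have hAB : ∀ q ∈ GB, q ∉ GA := fun q hq => Finset.disjoint_right.1 hdisj hq
  have hcBA : cB ∉ GA := hAB cB hcB
  have hcAB : cA ∉ GB := Finset.disjoint_left.1 hdisj hcA
  have hwA' : ∀ q ∈ GA, w q = wA q + (if q = cA then t else 0) := by
    intro q hq
    rw [hwdef]
    simp only [if_pos hq]
    congr 1
    by_cases h : q = cA
    · simp [h]
    · have h2 : ¬ (q = cB) := fun hc => hcBA (hc ▸ hq)
      simp [h, h2]
  have hwB' : ∀ q ∈ GB, w q = wB q + (if q = cB then t else 0) := by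
    intro q hq
    rw [hwdef]
    simp only [if_neg (hAB q hq)]
    congr 1
    by_cases h : q = cB
    · simp [h]
    · have h2 : ¬ (q = cA) := fun hc => hcAB (hc ▸ hq)
      simp [h, h2]
  have hdeltaA : ∀ f : L1 N → ℝ, ∑ q ∈ GA, f q * (if q = cA then t else 0) = f cA * t := by
    intro f
    rw [Finset.sum_eq_single_of_mem cA hcA (fun q _ hne => by rw [if_neg hne, mul_zero])]
    rw [if_pos rfl]
  have hdeltaB : ∀ f : L1 N → ℝ, ∑ q ∈ GB, f q * (if q = cB then t else 0) = f cB * t := by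
    intro f
    rw [Finset.sum_eq_single_of_mem cB hcB (fun q _ hne => by rw [if_neg hne, mul_zero])]
    rw [if_pos rfl]
  refine ⟨w, ?_, ?_⟩
  · intro x hx
    rw [Finset.sum_union hdisj]
    rcases Finset.mem_union.1 hx with hxA | hxB
    · -- x ∈ GA
      have hsA : ∑ q ∈ GA, Real.exp (-dist x q) * w q
          = 1 + Real.exp (-dist x cA) * t := by
        rw [Finset.sum_congr rfl fun q hq => by rw [hwA' q hq]]
        simp_rw [mul_add]
        rw [Finset.sum_add_distrib, hwA x hxA, hdeltaA (fun q => Real.exp (-dist x q))]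
      have hsB : ∑ q ∈ GB, Real.exp (-dist x q) * w q
          = Real.exp (-dist x cA) * E * (1 + t) := by
        rw [Finset.sum_congr rfl fun q hq => by rw [hwB' q hq]]
        have hfac : ∀ q ∈ GB, Real.exp (-dist x q)
            = Real.exp (-dist x cA) * E * Real.exp (-dist cB q) := by
          intro q hq
          rw [hsplit x hxA q hq, hE, ← Real.exp_add, ← Real.exp_add]
          congr 1; ring
        rw [Finset.sum_congr rfl fun q hq => by rw [hfac q hq]]
        simp_rw [mul_add, mul_assoc]
        rw [Finset.sum_add_distrib]
        rw [show ∑ q ∈ GB, Real.exp (-dist x cA) * (E * (Real.exp (-dist cB q) * wB q))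
            = Real.exp (-dist x cA) * E * ∑ q ∈ GB, Real.exp (-dist cB q) * wB q from by
          rw [Finset.mul_sum]; exact Finset.sum_congr rfl fun q _ => by ring]
        rw [hwB cB hcB]
        rw [show ∑ q ∈ GB, Real.exp (-dist x cA) * (E * (Real.exp (-dist cB q) * (if q = cB then t else 0)))
            = ∑ q ∈ GB, (Real.exp (-dist x cA) * E * Real.exp (-dist cB q)) * (if q = cB then t else 0) from
          Finset.sum_congr rfl fun q _ => by ring]
        rw [hdeltaB (fun q => Real.exp (-dist x cA) * E * Real.exp (-dist cB q))]
        rw [dist_self, neg_zero, Real.exp_zero]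
        ring
      rw [hsA, hsB]
      have : Real.exp (-dist x cA) * t + Real.exp (-dist x cA) * E * (1 + t)
          = Real.exp (-dist x cA) * (t + E * (1 + t)) := by ring
      rw [show (1:ℝ) + Real.exp (-dist x cA) * t + Real.exp (-dist x cA) * E * (1 + t)
          = 1 + Real.exp (-dist x cA) * (t + E * (1 + t)) from by ring, htkey]
      simp
    · -- x ∈ GB
      have hsB : ∑ q ∈ GB, Real.exp (-dist x q) * w q
          = 1 + Real.exp (-dist cB x) * t := by
        rw [Finset.sum_congr rfl fun q hq => by rw [hwB' q hq]]
        simp_rw [mul_add]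
        rw [Finset.sum_add_distrib, hwB x hxB, hdeltaB (fun q => Real.exp (-dist x q))]
        rw [dist_comm x cB]
      have hsA : ∑ q ∈ GA, Real.exp (-dist x q) * w q
          = Real.exp (-dist cB x) * E * (1 + t) := by
        rw [Finset.sum_congr rfl fun q hq => by rw [hwA' q hq]]
        have hfac : ∀ q ∈ GA, Real.exp (-dist x q)
            = Real.exp (-dist cB x) * E * Real.exp (-dist cA q) := by
          intro q hq
          rw [dist_comm x q, hsplit q hq x hxB, hE, ← Real.exp_add, ← Real.exp_add]
          rw [dist_comm cA q]
          congr 1; ring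
        rw [Finset.sum_congr rfl fun q hq => by rw [hfac q hq]]
        simp_rw [mul_add, mul_assoc]
        rw [Finset.sum_add_distrib]
        rw [show ∑ q ∈ GA, Real.exp (-dist cB x) * (E * (Real.exp (-dist cA q) * wA q))
            = Real.exp (-dist cB x) * E * ∑ q ∈ GA, Real.exp (-dist cA q) * wA q from by
          rw [Finset.mul_sum]; exact Finset.sum_congr rfl fun q _ => by ring]
        rw [hwA cA hcA]
        rw [show ∑ q ∈ GA, Real.exp (-dist cB x) * (E * (Real.exp (-dist cA q) * (if q = cA then t else 0)))
            = ∑ q ∈ GA, (Real.exp (-dist cB x) * E * Real.exp (-dist cA q)) * (if q = cA then t else 0) from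
          Finset.sum_congr rfl fun q _ => by ring]
        rw [hdeltaA (fun q => Real.exp (-dist cB x) * E * Real.exp (-dist cA q))]
        rw [dist_self, neg_zero, Real.exp_zero]
        ring
      rw [hsA, hsB]
      rw [show Real.exp (-dist cB x) * E * (1 + t) + (1 + Real.exp (-dist cB x) * t)
          = 1 + Real.exp (-dist cB x) * (t + E * (1 + t)) from by ring, htkey]
      simp
  · rw [Finset.sum_union hdisj]
    rw [Finset.sum_congr rfl fun q hq => hwA' q hq]
    rw [Finset.sum_congr rfl fun q hq => hwB' q hq]
    rw [Finset.sum_add_distrib, Finset.sum_add_distrib]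
    rw [Finset.sum_eq_single_of_mem cA hcA (fun q _ hne => if_neg hne),
      Finset.sum_eq_single_of_mem cB hcB (fun q _ hne => if_neg hne)]
    rw [if_pos rfl, if_pos rfl, ht]
    ring

lemma finMag_singleton {X : Type*} [MetricSpace X] (x : X) : finMag {x} = 1 := by
  rw [finMag_eq_sum {x} (fun _ => 1) ?_]
  · simp
  · intro q hq
    simp only [Finset.mem_singleton] at hq
    subst hq
    simp [dist_self]

lemma cMag_L1zero (K : Set (L1 0)) (hK : K.Nonempty) : cMag K = 1 := by
  have hsub : ∀ a b : L1 0, a = b := fun a b => PiLp.ext fun k => Fin.elim0 k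
  obtain ⟨x0, hx0⟩ := hK
  have hset : {m : ℝ | ∃ F : Finset (L1 0), ↑F ⊆ K ∧ m = finMag F} = {0, 1} := by
    ext m
    simp only [Set.mem_setOf_eq, Set.mem_insert_iff, Set.mem_singleton_iff]
    constructor
    · rintro ⟨F, hFK, rfl⟩
      rcases Finset.eq_empty_or_nonempty F with rfl | ⟨x, hx⟩
      · left; exact finMag_empty
      · right
        have hFx : F = {x} := Finset.eq_singleton_iff_unique_mem.2 ⟨hx, fun y _ => hsub y x⟩
        rw [hFx, finMag_singleton]
    · rintro (rfl | rfl)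
      · exact ⟨∅, by simp, finMag_empty.symm⟩
      · exact ⟨{x0}, by simp [hx0], (finMag_singleton x0).symm⟩
  rw [cMag, hset, csSup_pair]
  simp

lemma zero_apply {N : ℕ} (k : Fin N) : (0 : L1 N) k = 0 := rfl

lemma dist_zero_p {N : ℕ} (p : L1 N) : dist (0 : L1 N) p = ∑ k, |p k| := by
  rw [l1dist]
  refine Finset.sum_congr rfl fun k _ => ?_
  rw [zero_apply, zero_sub, abs_neg]

lemma skew_eq {N : ℕ} (p : L1 N) (hp : ∀ k, 0 < p k) :
    skewness (({0, p} : Finset (L1 N)) : Set (L1 N)) = ⨅ k : Fin N, ENNReal.ofReal (p k) := by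
  rcases Nat.eq_zero_or_pos N with hN | hN
  · subst hN
    have hsub : ∀ a b : L1 0, a = b := fun a b => PiLp.ext fun k => Fin.elim0 k
    rw [show (⨅ k : Fin 0, ENNReal.ofReal (p k)) = ⊤ from iInf_of_empty _, skewness]
    refine iInf_eq_top.2 fun a => iInf_eq_top.2 fun b => iInf_eq_top.2 fun hab => ?_
    exact absurd (Subtype.ext (hsub a.1 b.1)) hab
  · have hp0 : (0 : L1 N) ≠ p := by
      intro h
      have := hp ⟨0, hN⟩
      rw [← h, zero_apply] at this
      exact lt_irrefl _ this
    have hmem0 : (0 : L1 N) ∈ (({0, p} : Finset (L1 N)) : Set (L1 N)) := by simp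
    have hmemp : p ∈ (({0, p} : Finset (L1 N)) : Set (L1 N)) := by simp
    apply le_antisymm
    · have step : skewness (({0, p} : Finset (L1 N)) : Set (L1 N))
          ≤ ⨅ k : Fin N, ENNReal.ofReal |(0 : L1 N) k - p k| := by
        rw [skewness]
        refine le_trans (iInf_le _ ⟨(0 : L1 N), hmem0⟩) ?_
        refine le_trans (iInf_le _ ⟨p, hmemp⟩) ?_
        exact iInf_le _ (fun h => hp0 (congrArg Subtype.val h))
      refine le_trans step (le_iInf fun k => ?_)
      refine le_trans (iInf_le _ k) ?_
      rw [zero_apply, zero_sub, abs_neg, abs_of_pos (hp k)]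
    · rw [skewness]
      refine le_iInf fun a => le_iInf fun b => le_iInf fun hab => le_iInf fun k => ?_
      have ha := a.2
      have hb := b.2
      simp only [Finset.coe_insert, Finset.coe_singleton, Set.mem_insert_iff,
        Set.mem_singleton_iff] at ha hb
      have hval : a.1 ≠ b.1 := fun h => hab (Subtype.ext h)
      have habs : |a.1 k - b.1 k| = p k := by
        rcases ha with ha | ha <;> rcases hb with hb | hb
        · exact absurd (ha.trans hb.symm) hval
        · rw [ha, hb, zero_apply, zero_sub, abs_neg, abs_of_pos (hp k)]
        · rw [ha, hb, zero_apply, sub_zero, abs_of_pos (hp k)]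
        · exact absurd (ha.trans hb.symm) hval
      rw [habs]
      exact iInf_le _ k

lemma pair_mag {N : ℕ} (p : L1 N) (hp : ∀ k, 0 < p k) :
    finMag ({0, p} : Finset (L1 N)) = 2 / (1 + Real.exp (-∑ k, |p k|)) := by
  rcases Nat.eq_zero_or_pos N with hN | hN
  · subst hN
    have hsub : ∀ a b : L1 0, a = b := fun a b => PiLp.ext fun k => Fin.elim0 k
    have : ({0, p} : Finset (L1 0)) = {0} := by
      rw [hsub p 0]
      simp
    rw [this, finMag_singleton]
    norm_num
  · have hp0 : (0 : L1 N) ≠ p := by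
      intro h
      have := hp ⟨0, hN⟩
      rw [← h, zero_apply] at this
      exact lt_irrefl _ this
    set d : ℝ := ∑ k, |p k| with hd
    have hdist : dist (0 : L1 N) p = d := dist_zero_p p
    have h1d : (0:ℝ) < 1 + Real.exp (-d) := by positivity
    set w : L1 N → ℝ := fun _ => 1 / (1 + Real.exp (-d)) with hw
    have hwe : IsWeighting ({0, p} : Finset (L1 N)) w := by
      intro x hx
      rw [Finset.sum_pair hp0]
      simp only [Finset.mem_insert, Finset.mem_singleton] at hx
      rcases hx with h | h
      · rw [h, dist_self, hdist]
        simp only [hw]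
        rw [neg_zero, Real.exp_zero]
        field_simp
      · rw [h, dist_self, dist_comm p (0 : L1 N), hdist]
        simp only [hw]
        rw [neg_zero, Real.exp_zero]
        field_simp
        ring
    rw [finMag_eq_sum _ w hwe, Finset.sum_pair hp0]
    simp only [hw]
    rw [← add_div]
    norm_num

lemma mem_cube_iff {N : ℕ} (q : L1 N) (r : ℝ) (x : L1 N) :
    x ∈ cube q r ↔ ∀ k, q k - r ≤ x k ∧ x k ≤ q k + r := by
  simp [cube, Set.mem_Icc]

noncomputable def cornerA {N : ℕ} (r : ℝ) : L1 N := WithLp.toLp 1 (fun _ => r)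
noncomputable def cornerB {N : ℕ} (p : L1 N) (r : ℝ) : L1 N := WithLp.toLp 1 (fun k => p k - r)

lemma cornerA_apply {N : ℕ} (r : ℝ) (k : Fin N) : cornerA r k = r := rfl
lemma cornerB_apply {N : ℕ} (p : L1 N) (r : ℝ) (k : Fin N) : cornerB p r k = p k - r := rfl

lemma cube_dist_split {N : ℕ} (p : L1 N) (r : ℝ) (hpr : ∀ k, 2*r < p k)
    (x y : L1 N) (hx : x ∈ cube 0 r) (hy : y ∈ cube p r) :
    dist x y = dist x (cornerA r) + dist (cornerA r) (cornerB p r) + dist (cornerB p r) y := by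
  rw [l1dist, l1dist, l1dist, l1dist, ← Finset.sum_add_distrib, ← Finset.sum_add_distrib]
  refine Finset.sum_congr rfl fun k _ => ?_
  have hx' := (mem_cube_iff 0 r x).1 hx k
  have hy' := (mem_cube_iff p r y).1 hy k
  rw [zero_apply] at hx'
  rw [cornerA_apply, cornerB_apply]
  have h1 : x k - y k ≤ 0 := by obtain ⟨_, h2⟩ := hx'; obtain ⟨h3, _⟩ := hy'; have := hpr k; linarith
  have h2 : x k - r ≤ 0 := by linarith [hx'.2]
  have h3 : r - (p k - r) ≤ 0 := by linarith [hpr k]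
  have h4 : (p k - r) - y k ≤ 0 := by linarith [hy'.1]
  rw [abs_of_nonpos h1, abs_of_nonpos h2, abs_of_nonpos h3, abs_of_nonpos h4]
  ring

lemma corner_dist {N : ℕ} (p : L1 N) (hp : ∀ k, 0 < p k) (r : ℝ) (hpr : ∀ k, 2*r < p k) :
    dist (cornerA r : L1 N) (cornerB p r) = (∑ k, |p k|) - 2*N*r := by
  rw [l1dist]
  have habs : ∀ k : Fin N, |p k| = p k := fun k => abs_of_pos (hp k)
  rw [Finset.sum_congr rfl fun k _ => habs k]
  have hterm : ∀ k : Fin N, |(cornerA r : L1 N) k - cornerB p r k| = p k - 2*r := by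
    intro k
    rw [cornerA_apply, cornerB_apply, abs_of_nonpos (by linarith [hpr k])]
    ring
  rw [Finset.sum_congr rfl fun k _ => hterm k, Finset.sum_sub_distrib, Finset.sum_const,
    Finset.card_univ, Fintype.card_fin, nsmul_eq_mul]
  ring

lemma mem_cubes_iff {N : ℕ} (p : L1 N) (r : ℝ) (x : L1 N) :
    x ∈ cubes ({0, p} : Finset (L1 N)) r ↔ x ∈ cube 0 r ∨ x ∈ cube p r := by
  simp [cubes]

lemma upper_bound {N : ℕ} (hN : 0 < N) (p : L1 N) (hp : ∀ k, 0 < p k) (r : ℝ) (hr : 0 < r)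
    (hpr : ∀ k, 2 * r < p k) (F : Finset (L1 N))
    (hF : ↑F ⊆ cubes ({0, p} : Finset (L1 N)) r) :
    finMag F ≤ 2 * (1 + r) ^ N - 2 * Real.exp (-((∑ k, |p k|) - 2 * N * r)) /
        (1 + Real.exp (-((∑ k, |p k|) - 2 * N * r))) := by
  classical
  set cA : L1 N := cornerA r with hcA
  set cB : L1 N := cornerB p r with hcB
  set FA : Finset (L1 N) := F.filter (· ∈ cube 0 r) with hFA
  set FB : Finset (L1 N) := F.filter (· ∉ cube 0 r) with hFB
  have hFBmem : ∀ x ∈ FB, x ∈ cube p r := by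
    intro x hx
    rw [hFB, Finset.mem_filter] at hx
    rcases (mem_cubes_iff p r x).1 (hF hx.1) with h | h
    · exact absurd h hx.2
    · exact h
  set SA : Fin N → Finset ℝ := fun k => insert r (FA.image fun x => x k) with hSA
  set SB : Fin N → Finset ℝ := fun k => insert (p k - r) (FB.image fun x => x k) with hSB
  have hSAsub : ∀ k, ∀ a ∈ SA k, a ∈ Set.Icc (-r) r := by
    intro k a ha
    rw [hSA, Finset.mem_insert] at ha
    rcases ha with rfl | ha
    · exact ⟨by linarith, le_refl _⟩
    · obtain ⟨x, hx, rfl⟩ := Finset.mem_image.1 ha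
      rw [hFA, Finset.mem_filter] at hx
      have := (mem_cube_iff 0 r x).1 hx.2 k
      rw [zero_apply] at this
      exact ⟨by linarith [this.1], by linarith [this.2]⟩
  have hSBsub : ∀ k, ∀ a ∈ SB k, a ∈ Set.Icc (p k - r) (p k + r) := by
    intro k a ha
    rw [hSB, Finset.mem_insert] at ha
    rcases ha with rfl | ha
    · exact ⟨le_refl _, by linarith⟩
    · obtain ⟨x, hx, rfl⟩ := Finset.mem_image.1 ha
      exact (mem_cube_iff p r x).1 (hFBmem x hx) k
  have hwAex := fun k => chain_of_finset (SA k) ⟨r, Finset.mem_insert_self _ _⟩ (-r) r (hSAsub k)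
  choose wA hwA1 hwA2 hwA3 using hwAex
  have hwBex := fun k => chain_of_finset (SB k) ⟨p k - r, Finset.mem_insert_self _ _⟩
    (p k - r) (p k + r) (hSBsub k)
  choose wB hwB1 hwB2 hwB3 using hwBex
  set GA : Finset (L1 N) := piF SA with hGA
  set GB : Finset (L1 N) := piF SB with hGB
  obtain ⟨hGA1, hGA2⟩ := prod_weighting SA wA hwA1
  obtain ⟨hGB1, hGB2⟩ := prod_weighting SB wB hwB1
  have hcAGA : cA ∈ GA := by
    rw [hGA, mem_piF]
    intro k
    rw [hcA, cornerA_apply]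
    exact Finset.mem_insert_self _ _
  have hcBGB : cB ∈ GB := by
    rw [hGB, mem_piF]
    intro k
    rw [hcB, cornerB_apply]
    exact Finset.mem_insert_self _ _
  have hGAcube : ∀ x ∈ GA, x ∈ cube 0 r := by
    intro x hx
    rw [hGA, mem_piF] at hx
    rw [mem_cube_iff]
    intro k
    have := hSAsub k _ (hx k)
    rw [zero_apply]
    exact ⟨by linarith [this.1], by linarith [this.2]⟩
  have hGBcube : ∀ x ∈ GB, x ∈ cube p r := by
    intro x hx
    rw [hGB, mem_piF] at hx
    rw [mem_cube_iff]
    intro k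
    exact hSBsub k _ (hx k)
  have hdisj : Disjoint GA GB := by
    rw [Finset.disjoint_left]
    intro x hxA hxB
    set k0 : Fin N := ⟨0, hN⟩
    have h1 := (mem_cube_iff 0 r x).1 (hGAcube x hxA) k0
    have h2 := (mem_cube_iff p r x).1 (hGBcube x hxB) k0
    rw [zero_apply] at h1
    have := hpr k0
    linarith [h1.2, h2.1]
  have hsplit : ∀ x ∈ GA, ∀ y ∈ GB, dist x y = dist x cA + dist cA cB + dist cB y := by
    intro x hx y hy
    exact cube_dist_split p r hpr x y (hGAcube x hx) (hGBcube y hy)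
  obtain ⟨w, hw, hwsum⟩ := glue GA GB cA cB hdisj hcAGA hcBGB hsplit
    (fun y => ∏ k, wA k (y k)) (fun y => ∏ k, wB k (y k)) hGA1 hGB1
  have hFsub : F ⊆ GA ∪ GB := by
    intro x hx
    rw [Finset.mem_union]
    by_cases hc : x ∈ cube 0 r
    · left
      rw [hGA, mem_piF]
      intro k
      rw [hSA]
      exact Finset.mem_insert_of_mem (Finset.mem_image_of_mem _
        (by rw [hFA, Finset.mem_filter]; exact ⟨hx, hc⟩))
    · right
      rw [hGB, mem_piF]
      intro k
      rw [hSB]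
      exact Finset.mem_insert_of_mem (Finset.mem_image_of_mem _
        (by rw [hFB, Finset.mem_filter]; exact ⟨hx, hc⟩))
  have hle := finMag_le_weighting F (GA ∪ GB) hFsub w hw
  rw [hwsum] at hle
  have hDenn : dist cA cB = (∑ k, |p k|) - 2*N*r := corner_dist p hp r hpr
  rw [hDenn] at hle
  have hA : ∑ q ∈ GA, ∏ k, wA k (q k) ≤ (1 + r)^N := by
    have e1 : ∑ q ∈ GA, ∏ k, wA k (q k) = ∏ k, ∑ b ∈ SA k, wA k b := hGA2
    rw [e1]
    calc ∏ k, ∑ b ∈ SA k, wA k b ≤ ∏ k : Fin N, (1 + r) := by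
          apply Finset.prod_le_prod
          · intro k _; linarith [hwA2 k]
          · intro k _
            have := hwA3 k
            have heq : 1 + (r - -r)/2 = 1 + r := by ring
            linarith [heq ▸ this]
      _ = (1 + r)^N := by rw [Finset.prod_const, Finset.card_univ, Fintype.card_fin]
  have hB : ∑ q ∈ GB, ∏ k, wB k (q k) ≤ (1 + r)^N := by
    have e1 : ∑ q ∈ GB, ∏ k, wB k (q k) = ∏ k, ∑ b ∈ SB k, wB k b := hGB2
    rw [e1]
    calc ∏ k, ∑ b ∈ SB k, wB k b ≤ ∏ k : Fin N, (1 + r) := by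
          apply Finset.prod_le_prod
          · intro k _; linarith [hwB2 k]
          · intro k _
            have := hwB3 k
            have heq : 1 + ((p k + r) - (p k - r))/2 = 1 + r := by ring
            linarith [heq ▸ this]
      _ = (1 + r)^N := by rw [Finset.prod_const, Finset.card_univ, Fintype.card_fin]
  calc finMag F ≤ _ := hle
    _ ≤ _ := by
        have h2 : (0:ℝ) < 1 + Real.exp (-((∑ k, |p k|) - 2*N*r)) := by positivity
        linarith [hA, hB]

lemma grid_value {N : ℕ} (hN : 0 < N) (p : L1 N) (hp : ∀ k, 0 < p k) (r : ℝ) (hr : 0 < r)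
    (hpr : ∀ k, 2 * r < p k) (m : ℕ) (hm : 0 < m) :
    ∃ F : Finset (L1 N), ↑F ⊆ cubes ({0, p} : Finset (L1 N)) r ∧
      finMag F = 2 * (1 + m * th (2*r/m)) ^ N
        - 2 * Real.exp (-((∑ k, |p k|) - 2 * N * r)) /
            (1 + Real.exp (-((∑ k, |p k|) - 2 * N * r))) := by
  classical
  obtain ⟨A, hAsub, hrA, wg, hwg1, hwg2⟩ := chain_grid r hr m hm
  set SA : Fin N → Finset ℝ := fun _ => A with hSA
  set SB : Fin N → Finset ℝ := fun k => A.image (fun a => p k - a) with hSB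
  set wA : Fin N → ℝ → ℝ := fun _ => wg with hwA
  set wB : Fin N → ℝ → ℝ := fun k b => wg (p k - b) with hwB
  have hinj : ∀ k : Fin N, ∀ a ∈ A, ∀ b ∈ A, p k - a = p k - b → a = b := by
    intro k a _ b _ h; linarith
  have hwB1 : ∀ k, ∀ a ∈ SB k, ∑ b ∈ SB k, Real.exp (-|a - b|) * wB k b = 1 := by
    intro k a ha
    rw [hSB] at ha
    obtain ⟨a0, ha0, rfl⟩ := Finset.mem_image.1 ha
    rw [hSB]
    simp only []
    rw [Finset.sum_image (hinj k)]
    have hterm : ∀ b ∈ A, Real.exp (-|p k - a0 - (p k - b)|) * wB k (p k - b)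
        = Real.exp (-|a0 - b|) * wg b := by
      intro b _
      have h1 : p k - a0 - (p k - b) = b - a0 := by ring
      have h2 : wB k (p k - b) = wg b := by rw [hwB]; simp only []; congr 1; ring
      rw [h1, abs_sub_comm, h2]
    rw [Finset.sum_congr rfl hterm]
    exact hwg1 a0 ha0
  have hwB2 : ∀ k, ∑ b ∈ SB k, wB k b = ∑ b ∈ A, wg b := by
    intro k
    rw [hSB]
    simp only []
    rw [Finset.sum_image (hinj k)]
    refine Finset.sum_congr rfl fun b _ => ?_
    rw [hwB]; simp only []; congr 1; ring
  set GA : Finset (L1 N) := piF SA with hGA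
  set GB : Finset (L1 N) := piF SB with hGB
  obtain ⟨hGA1, hGA2⟩ := prod_weighting SA wA (fun k => hwg1)
  obtain ⟨hGB1, hGB2⟩ := prod_weighting SB wB hwB1
  set cA : L1 N := cornerA r with hcA
  set cB : L1 N := cornerB p r with hcB
  have hcAGA : cA ∈ GA := by
    rw [hGA, mem_piF]
    intro k
    rw [hcA, cornerA_apply]
    exact hrA
  have hcBGB : cB ∈ GB := by
    rw [hGB, mem_piF]
    intro k
    rw [hcB, cornerB_apply, hSB]
    exact Finset.mem_image_of_mem _ hrA
  have hGAcube : ∀ x ∈ GA, x ∈ cube 0 r := by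
    intro x hx
    rw [hGA, mem_piF] at hx
    rw [mem_cube_iff]
    intro k
    have := hAsub _ (hx k)
    rw [zero_apply]
    exact ⟨by linarith [this.1], by linarith [this.2]⟩
  have hGBcube : ∀ x ∈ GB, x ∈ cube p r := by
    intro x hx
    rw [hGB, mem_piF] at hx
    rw [mem_cube_iff]
    intro k
    have hxk := hx k
    rw [hSB] at hxk
    obtain ⟨a, haA, hab⟩ := Finset.mem_image.1 hxk
    have := hAsub a haA
    constructor <;> [skip; skip] <;> rw [← hab] <;>
      [linarith [this.2]; linarith [this.1]]
  have hdisj : Disjoint GA GB := by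
    rw [Finset.disjoint_left]
    intro x hxA hxB
    set k0 : Fin N := ⟨0, hN⟩
    have h1 := (mem_cube_iff 0 r x).1 (hGAcube x hxA) k0
    have h2 := (mem_cube_iff p r x).1 (hGBcube x hxB) k0
    rw [zero_apply] at h1
    have := hpr k0
    linarith [h1.2, h2.1]
  have hsplit : ∀ x ∈ GA, ∀ y ∈ GB, dist x y = dist x cA + dist cA cB + dist cB y := by
    intro x hx y hy
    exact cube_dist_split p r hpr x y (hGAcube x hx) (hGBcube y hy)
  obtain ⟨w, hw, hwsum⟩ := glue GA GB cA cB hdisj hcAGA hcBGB hsplit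
    (fun y => ∏ k, wA k (y k)) (fun y => ∏ k, wB k (y k)) hGA1 hGB1
  refine ⟨GA ∪ GB, ?_, ?_⟩
  · intro x hx
    rw [Finset.mem_coe, Finset.mem_union] at hx
    rw [mem_cubes_iff]
    rcases hx with hx | hx
    · exact Or.inl (hGAcube x hx)
    · exact Or.inr (hGBcube x hx)
  · rw [finMag_eq_sum _ w hw, hwsum]
    have hDenn : dist cA cB = (∑ k, |p k|) - 2*N*r := corner_dist p hp r hpr
    rw [hDenn]
    have eA : ∑ q ∈ GA, ∏ k, wA k (q k) = (1 + m * th (2*r/m)) ^ N := by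
      have e1 : ∑ q ∈ GA, ∏ k, wA k (q k) = ∏ k, ∑ b ∈ SA k, wA k b := hGA2
      rw [e1]
      rw [Finset.prod_congr rfl fun k _ => (show ∑ b ∈ SA k, wA k b = 1 + m * th (2*r/m) from hwg2)]
      rw [Finset.prod_const, Finset.card_univ, Fintype.card_fin]
    have eB : ∑ q ∈ GB, ∏ k, wB k (q k) = (1 + m * th (2*r/m)) ^ N := by
      have e1 : ∑ q ∈ GB, ∏ k, wB k (q k) = ∏ k, ∑ b ∈ SB k, wB k b := hGB2
      rw [e1]
      rw [Finset.prod_congr rfl fun k _ => (hwB2 k).trans hwg2]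
      rw [Finset.prod_const, Finset.card_univ, Fintype.card_fin]
    rw [eA, eB]
    ring

lemma mth_tendsto (r : ℝ) (hr : 0 < r) :
    Tendsto (fun m : ℕ => (m:ℝ) * th (2*r/m)) atTop (𝓝 r) := by
  apply tendsto_of_tendsto_of_tendsto_of_le_of_le' (g := fun m : ℕ => r - r^2/m)
    (h := fun _ : ℕ => r)
  · have h0 : Tendsto (fun m : ℕ => r^2/(m:ℝ)) atTop (𝓝 0) :=
      tendsto_const_div_atTop_nhds_zero_nat (r^2)
    have := tendsto_const_nhds (x := r) (f := atTop (α := ℕ)) |>.sub h0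
    simpa using this
  · exact tendsto_const_nhds
  · filter_upwards [eventually_ge_atTop 1] with m hm
    have hM : (1:ℝ) ≤ m := by exact_mod_cast hm
    have hM0 : (0:ℝ) < m := by linarith
    have hy0 : 0 ≤ 2*r/m := by positivity
    have hth := th_ge hy0
    have h1 := mul_le_mul_of_nonneg_left hth (le_of_lt hM0)
    have h2 : (m:ℝ) * (2*r/m/2 - (2*r/m)^2/4) = r - r^2/m := by
      field_simp
      ring
    linarith [h2 ▸ h1]
  · filter_upwards [eventually_ge_atTop 1] with m hm
    have hM : (1:ℝ) ≤ m := by exact_mod_cast hm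
    have hM0 : (0:ℝ) < m := by linarith
    have hy0 : 0 ≤ 2*r/m := by positivity
    have hth := th_le_half hy0
    have h1 := mul_le_mul_of_nonneg_left hth (le_of_lt hM0)
    have h2 : (m:ℝ) * (2*r/m/2) = r := by field_simp
    linarith [h2 ▸ h1]

lemma cMag_two_cubes {N : ℕ} (hN : 0 < N) (p : L1 N) (hp : ∀ k, 0 < p k) (r : ℝ) (hr : 0 < r)
    (hpr : ∀ k, 2 * r < p k) :
    cMag (cubes ({0, p} : Finset (L1 N)) r)
      = 2 * (1 + r) ^ N - 2 * Real.exp (-((∑ k, |p k|) - 2 * N * r)) /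
          (1 + Real.exp (-((∑ k, |p k|) - 2 * N * r))) := by
  classical
  set C : ℝ := 2 * Real.exp (-((∑ k, |p k|) - 2 * N * r)) /
      (1 + Real.exp (-((∑ k, |p k|) - 2 * N * r))) with hC
  set V : ℝ := 2 * (1 + r) ^ N - C with hV
  set S : Set ℝ := {m : ℝ | ∃ F : Finset (L1 N),
      ↑F ⊆ cubes ({0, p} : Finset (L1 N)) r ∧ m = finMag F} with hS
  have hub : ∀ x ∈ S, x ≤ V := by
    rintro x ⟨F, hF, rfl⟩
    exact upper_bound hN p hp r hr hpr F hF
  have hne : S.Nonempty := ⟨0, ∅, by simp, finMag_empty.symm⟩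
  have hbdd : BddAbove S := ⟨V, hub⟩
  have hcm : cMag (cubes ({0, p} : Finset (L1 N)) r) = sSup S := rfl
  rw [hcm]
  apply le_antisymm (csSup_le hne hub)
  -- lower bound via grids
  have hseq : Tendsto (fun m : ℕ => 2 * (1 + m * th (2*r/m)) ^ N - C) atTop (𝓝 V) := by
    have h1 := mth_tendsto r hr
    have h2 : Tendsto (fun m : ℕ => 1 + (m:ℝ) * th (2*r/m)) atTop (𝓝 (1 + r)) :=
      (tendsto_const_nhds (x := (1:ℝ))).add h1
    have h3 := (h2.pow N).const_mul (2:ℝ)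
    have h4 := h3.sub (tendsto_const_nhds (x := C))
    exact h4
  refine le_of_tendsto hseq ?_
  filter_upwards [eventually_ge_atTop 1] with m hm
  obtain ⟨F, hF, hFval⟩ := grid_value hN p hp r hr hpr m hm
  have : 2 * (1 + m * th (2*r/m)) ^ N - C = finMag F := by rw [hFval, hC]
  rw [this]
  exact le_csSup hbdd ⟨F, hF, rfl⟩

end MagAux

theorem stmt16 {N : ℕ} (p : L1 N) (hp : ∀ k, 0 < p k) :
    -- `F = {0, p}` is skew with `skew F = min_k p_k`
    IsSkew (({0, p} : Finset (L1 N)) : Set (L1 N)) ∧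
    (skewness (({0, p} : Finset (L1 N)) : Set (L1 N)) =
      ⨅ k : Fin N, ENNReal.ofReal (p k)) ∧
    -- the magnitude of the union of the two cubes, for `r ∈ (0, skew F / 2)`
    (∀ r : ℝ, 0 < r →
      ENNReal.ofReal (2 * r) < skewness (({0, p} : Finset (L1 N)) : Set (L1 N)) →
      cMag (cubes ({0, p} : Finset (L1 N)) r) =
        2 * (1 + r) ^ N -
          2 * Real.exp (-((∑ k, |p k|) - 2 * N * r)) /
            (1 + Real.exp (-((∑ k, |p k|) - 2 * N * r)))) ∧
    -- the limit as `r ↘ 0`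
    Tendsto (fun r : ℝ => cMag (cubes ({0, p} : Finset (L1 N)) r)) (𝓝[>] 0)
      (𝓝 (2 / (1 + Real.exp (-∑ k, |p k|)))) ∧
    finMag ({0, p} : Finset (L1 N)) = 2 / (1 + Real.exp (-∑ k, |p k|)) := by
  have hskew := MagAux.skew_eq p hp
  have hcubesne : ∀ r : ℝ, (0 : L1 N) ∈ cubes ({0, p} : Finset (L1 N)) r ∨ True := fun _ => Or.inr trivial
  refine ⟨?_, hskew, ?_, ?_, MagAux.pair_mag p hp⟩
  · -- IsSkew
    rw [IsSkew, hskew]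
    rcases Nat.eq_zero_or_pos N with hN | hN
    · subst hN
      rw [show (⨅ k : Fin 0, ENNReal.ofReal (p k)) = ⊤ from iInf_of_empty _]
      exact ENNReal.zero_lt_top
    · obtain ⟨k0, -, hk0⟩ := Finset.exists_min_image Finset.univ (fun k => p k)
        ⟨⟨0, hN⟩, Finset.mem_univ _⟩
      refine lt_of_lt_of_le (ENNReal.ofReal_pos.2 (hp k0)) (le_iInf fun k => ?_)
      exact ENNReal.ofReal_le_ofReal (hk0 k (Finset.mem_univ _))
  · -- the cube-union magnitude
    intro r hr hlt
    rcases Nat.eq_zero_or_pos N with hN | hN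
    · subst hN
      have h0 : (0 : L1 0) ∈ cubes ({0, p} : Finset (L1 0)) r := by
        rw [MagAux.mem_cubes_iff]
        left
        rw [MagAux.mem_cube_iff]
        exact fun k => Fin.elim0 k
      rw [MagAux.cMag_L1zero _ ⟨0, h0⟩]
      norm_num
    · rw [hskew] at hlt
      have hpr : ∀ k, 2 * r < p k := by
        intro k
        have h1 := lt_of_lt_of_le hlt (iInf_le _ k)
        exact (ENNReal.ofReal_lt_ofReal_iff (hp k)).1 h1
      exact MagAux.cMag_two_cubes hN p hp r hr hpr
  · -- the limit
    rcases Nat.eq_zero_or_pos N with hN | hN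
    · subst hN
      have hfun : (fun r : ℝ => cMag (cubes ({0, p} : Finset (L1 0)) r)) = fun _ => 1 := by
        funext r
        have h0 : (0 : L1 0) ∈ cubes ({0, p} : Finset (L1 0)) r := by
          rw [MagAux.mem_cubes_iff]
          left
          rw [MagAux.mem_cube_iff]
          exact fun k => Fin.elim0 k
        exact MagAux.cMag_L1zero _ ⟨0, h0⟩
      rw [hfun]
      have : (2 : ℝ) / (1 + Real.exp (-∑ k : Fin 0, |p k|)) = 1 := by
        norm_num
      rw [this]
      exact tendsto_const_nhds
    · set d : ℝ := ∑ k, |p k| with hd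
      set φ : ℝ → ℝ := fun r => 2 * (1 + r) ^ N -
          2 * Real.exp (-(d - 2 * N * r)) / (1 + Real.exp (-(d - 2 * N * r))) with hφ
      obtain ⟨k0, -, hk0⟩ := Finset.exists_min_image Finset.univ (fun k => p k)
        ⟨⟨0, hN⟩, Finset.mem_univ _⟩
      have hε : (0:ℝ) < p k0 / 2 := by linarith [hp k0]
      have hEq : (fun r : ℝ => φ r) =ᶠ[𝓝[>] (0:ℝ)]
          (fun r : ℝ => cMag (cubes ({0, p} : Finset (L1 N)) r)) := by
        have hmem : Set.Ioo (0:ℝ) (p k0 / 2) ∈ 𝓝[>] (0:ℝ) :=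
          Ioo_mem_nhdsGT_of_mem ⟨le_refl 0, hε⟩
        refine Filter.eventually_of_mem hmem fun r hrm => ?_
        have hr : 0 < r := hrm.1
        have hpr : ∀ k, 2 * r < p k := by
          intro k
          have := hk0 k (Finset.mem_univ _)
          have := hrm.2
          linarith [hk0 k (Finset.mem_univ _), hrm.2]
        show φ r = cMag (cubes ({0, p} : Finset (L1 N)) r)
        rw [MagAux.cMag_two_cubes hN p hp r hr hpr]
      have hc2 : Continuous fun r : ℝ => Real.exp (-(d - 2 * N * r)) := by
        apply Real.continuous_exp.comp
        continuity
      have hc3 : Continuous φ := by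
        rw [hφ]
        apply Continuous.sub
        · continuity
        · apply Continuous.div
          · exact continuous_const.mul hc2
          · exact continuous_const.add hc2
          · intro x
            positivity
      have hφ0 : φ 0 = 2 / (1 + Real.exp (-d)) := by
        have hpos : (0:ℝ) < 1 + Real.exp (-d) := by positivity
        simp only [hφ]
        norm_num
        field_simp
        ring
      have htend : Tendsto φ (𝓝[>] (0:ℝ)) (𝓝 (2 / (1 + Real.exp (-d)))) := by
        rw [← hφ0]
        exact (hc3.tendsto 0).mono_left nhdsWithin_le_nhds
      exact htend.congr' hEq
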